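/- Let n ≥ 1, let K be a commutative ring, and let α_1, …, α_n, β_1, …, β_n ∈ K. Define the n×n matrix M by: M_{j,j} = 1 - α_j β_j for 1 ≤ j ≤ n; M_{j, j+1} = α_j for 1 ≤ j ≤ n-1; M_{i,j} = (-1)^{i-j} (β_j β_{j+1} ⋯ β_{i-1}) (1 - α_i β_i) for i > j; and M_{i,j} = 0 for j > i+1. Then det(M) = 1 - α_n β_n. -/

import Mathlib

open Finset

/-- The Hessenberg determinant appearing in the computation of the deformed shift
operator on the vacuum: with `1`-indexed entries `M_{j,j} = 1 - α_j β_j`,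
`M_{j,j+1} = α_j`, `M_{i,j} = (-1)^{i-j} β_j ⋯ β_{i-1} (1 - α_i β_i)` for `i > j`, and
`M_{i,j} = 0` for `j > i + 1`, one has `det M = 1 - α_n β_n`. -/
theorem stmt_8 {K : Type*} [CommRing K] (n : ℕ) (hn : 1 ≤ n) (α β : ℕ → K) :
    (Matrix.of fun i j : Fin n =>
        if i = j then 1 - α ((i : ℕ) + 1) * β ((i : ℕ) + 1)
        else if (j : ℕ) = (i : ℕ) + 1 then α ((i : ℕ) + 1)
        else if (j : ℕ) < (i : ℕ) then
          (-1 : K) ^ ((i : ℕ) - (j : ℕ)) * (∏ t ∈ Finset.Ico (j : ℕ) (i : ℕ), β (t + 1)) *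
            (1 - α ((i : ℕ) + 1) * β ((i : ℕ) + 1))
        else 0).det = 1 - α n * β n := by
  set A : Matrix (Fin n) (Fin n) K := Matrix.of fun i j : Fin n =>
        if i = j then 1 - α ((i : ℕ) + 1) * β ((i : ℕ) + 1)
        else if (j : ℕ) = (i : ℕ) + 1 then α ((i : ℕ) + 1)
        else if (j : ℕ) < (i : ℕ) then
          (-1 : K) ^ ((i : ℕ) - (j : ℕ)) * (∏ t ∈ Finset.Ico (j : ℕ) (i : ℕ), β (t + 1)) *
            (1 - α ((i : ℕ) + 1) * β ((i : ℕ) + 1))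
        else 0 with hA
  set T : Matrix (Fin n) (Fin n) K := Matrix.of fun k j : Fin n =>
    if k = j then (1 : K) else if (k : ℕ) = (j : ℕ) + 1 then β ((j : ℕ) + 1) else 0 with hT
  -- T is lower triangular with unit diagonal
  have hTdet : T.det = 1 := by
    have ht : T.BlockTriangular OrderDual.toDual := by
      intro i j hij
      have hij' : (i : ℕ) < (j : ℕ) := hij
      simp only [hT, Matrix.of_apply]
      rw [if_neg (by simp [Fin.ext_iff]; omega), if_neg (by omega)]
    rw [Matrix.det_of_lowerTriangular T ht]
    simp [hT]
  -- entrywise formula for A * T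
  have hmul : ∀ i j : Fin n, (A * T) i j =
      A i j + (if h : (j : ℕ) + 1 < n then β ((j : ℕ) + 1) * A i ⟨(j : ℕ) + 1, h⟩ else 0) := by
    intro i j
    rw [Matrix.mul_apply]
    have hsplit : ∀ k : Fin n, A i k * T k j =
        (if k = j then A i j else 0) +
          (if h1 : (j : ℕ) + 1 < n then
            (if k = (⟨(j : ℕ) + 1, h1⟩ : Fin n) then
              β ((j : ℕ) + 1) * A i ⟨(j : ℕ) + 1, h1⟩ else 0) else 0) := by
      intro k
      by_cases h1 : (j : ℕ) + 1 < n
      · simp only [dif_pos h1, hT, Matrix.of_apply]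
        by_cases h2 : k = j
        · subst h2
          rw [if_pos rfl, if_pos rfl, if_neg (by simp [Fin.ext_iff])]
          ring
        · rw [if_neg h2, if_neg h2]
          by_cases h3 : k = (⟨(j : ℕ) + 1, h1⟩ : Fin n)
          · subst h3
            rw [if_pos rfl, if_pos rfl]
            ring
          · rw [if_neg h3, if_neg (by simpa [Fin.ext_iff] using h3)]
            ring
      · simp only [dif_neg h1, hT, Matrix.of_apply]
        by_cases h2 : k = j
        · subst h2; simp
        · rw [if_neg h2, if_neg h2, if_neg (by omega)]
          ring
    rw [Finset.sum_congr rfl fun k _ => hsplit k, Finset.sum_add_distrib,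
      Finset.sum_ite_eq' Finset.univ j (fun _ => A i j)]
    by_cases h1 : (j : ℕ) + 1 < n
    · simp only [dif_pos h1,
        Finset.sum_ite_eq' Finset.univ (⟨(j : ℕ) + 1, h1⟩ : Fin n)]
      simp
    · simp [h1]
  -- A * T is upper triangular
  have htri : (A * T).BlockTriangular id := by
    intro i j hij
    have hij' : (j : ℕ) < (i : ℕ) := hij
    have h1 : (j : ℕ) + 1 < n := by omega
    rw [hmul, dif_pos h1]
    simp only [hA, Matrix.of_apply]
    rw [if_neg (by simp [Fin.ext_iff]; omega), if_neg (by omega), if_pos hij']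
    by_cases h2 : (i : ℕ) = (j : ℕ) + 1
    · rw [if_pos (by simp [Fin.ext_iff, h2])]
      have hpow : (i : ℕ) - (j : ℕ) = 1 := by omega
      have hprod : (∏ t ∈ Finset.Ico (j : ℕ) (i : ℕ), β (t + 1)) = β ((j : ℕ) + 1) := by
        rw [h2, Nat.Ico_succ_singleton, Finset.prod_singleton]
      rw [hpow, hprod]
      ring
    · rw [if_neg (by simp [Fin.ext_iff]; omega), if_neg (by omega), if_pos (by omega)]
      have hd : (i : ℕ) - (j : ℕ) = ((i : ℕ) - ((j : ℕ) + 1)) + 1 := by omega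
      have hprod : (∏ t ∈ Finset.Ico (j : ℕ) (i : ℕ), β (t + 1)) =
          β ((j : ℕ) + 1) * ∏ t ∈ Finset.Ico ((j : ℕ) + 1) (i : ℕ), β (t + 1) :=
        Finset.prod_eq_prod_Ico_succ_bot hij' _
      rw [hd, hprod, pow_succ]
      ring
  -- diagonal entries of A * T
  have hdiag : ∀ j : Fin n, (A * T) j j =
      if (j : ℕ) + 1 < n then 1 else 1 - α n * β n := by
    intro j
    rw [hmul]
    by_cases h1 : (j : ℕ) + 1 < n
    · rw [dif_pos h1, if_pos h1]
      have hne : j ≠ (⟨(j : ℕ) + 1, h1⟩ : Fin n) := by simp [Fin.ext_iff]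
      have e1 : A j j = 1 - α ((j : ℕ) + 1) * β ((j : ℕ) + 1) := by
        simp [hA]
      have e2 : A j (⟨(j : ℕ) + 1, h1⟩ : Fin n) = α ((j : ℕ) + 1) := by
        simp only [hA, Matrix.of_apply]
        rw [if_neg hne]
        simp
      rw [e1, e2]
      ring
    · rw [dif_neg h1, if_neg h1]
      have h2 : (j : ℕ) + 1 = n := by omega
      have e1 : A j j = 1 - α ((j : ℕ) + 1) * β ((j : ℕ) + 1) := by simp [hA]
      rw [e1, h2]
      ring
  -- conclude
  have key : A.det = (A * T).det := by rw [Matrix.det_mul, hTdet, mul_one]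
  rw [key, Matrix.det_of_upperTriangular htri]
  have hlast : (⟨n - 1, by omega⟩ : Fin n) ∈ Finset.univ := Finset.mem_univ _
  rw [Finset.prod_eq_single (⟨n - 1, by omega⟩ : Fin n)]
  · rw [hdiag, if_neg (by simp; omega)]
  · intro j _ hj
    rw [hdiag, if_pos (by have := j.isLt; simp [Fin.ext_iff] at hj; omega)]
  · intro h; exact absurd hlast h
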